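/- Let S : ℝ → Set ℝ^d be a set-valued mapping such that for every y ∈ ℝ^d and every t ∈ ℝ, the distance function t ↦ d(y, S t) is either left-continuous or right-continuous on a neighborhood of t. If μ is a measure on ℝ assigning positive measure to every nonempty open interval, then every continuous function y : ℝ → ℝ^d with y t ∈ S t for μ-a.e. t satisfies y t ∈ closure(S t) for all t. -/

import Mathlib

open EMetric Set MeasureTheory Filter

theorem no_removable_discontinuities_selection {d : ℕ}
    (S : ℝ → Set (EuclideanSpace ℝ (Fin d)))
    (hS : ∀ (v : EuclideanSpace ℝ (Fin d)) (t : ℝ), ∃ U ∈ nhds t,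
      (∀ s ∈ U, ContinuousWithinAt (fun u => infEdist v (S u)) (Iic s) s) ∨
      (∀ s ∈ U, ContinuousWithinAt (fun u => infEdist v (S u)) (Ici s) s))
    (μ : Measure ℝ) (hμ : ∀ a b : ℝ, a < b → 0 < μ (Ioo a b))
    (y : ℝ → EuclideanSpace ℝ (Fin d)) (hy : Continuous y)
    (hsel : ∀ᵐ t ∂μ, y t ∈ S t) :
    ∀ t, y t ∈ closure (S t) := by
  intro t
  rw [EMetric.mem_closure_iff_infEdist_zero]
  set v := y t with hv
  obtain ⟨U, hU, hcase⟩ := hS v t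
  have htU : t ∈ U := mem_of_mem_nhds hU
  have hA : ∀ a b : ℝ, a < b → ∃ s, s ∈ Ioo a b ∧ y s ∈ S s := by
    intro a b hab
    by_contra h
    push_neg at h
    have hsub : Ioo a b ⊆ {s | ¬ y s ∈ S s} := fun s hs => h s hs
    exact (hμ a b hab).ne' (measure_mono_null hsub (ae_iff.mp hsel))
  have hone : Tendsto (fun n : ℕ => (1 : ℝ) / (n + 1)) Filter.atTop (nhds 0) :=
    tendsto_one_div_add_atTop_nhds_zero_nat
  rcases hcase with hcont | hcont
  · have hct := hcont t htU
    choose s hs1 hs2 using fun n : ℕ =>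
      hA (t - 1 / (n + 1)) t (sub_lt_self t (by positivity))
    have hslt : ∀ n, t - 1 / (n + 1) < s n := fun n => (hs1 n).1
    have hsle : ∀ n, s n ≤ t := fun n => (hs1 n).2.le
    have hstend : Tendsto s Filter.atTop (nhds t) := by
      have hl : Tendsto (fun n : ℕ => t - 1 / (n + 1)) Filter.atTop (nhds t) := by
        simpa using tendsto_const_nhds.sub hone
      exact tendsto_of_tendsto_of_tendsto_of_le_of_le hl tendsto_const_nhds
        (fun n => (hslt n).le) hsle
    have hstend' : Tendsto s Filter.atTop (nhdsWithin t (Iic t)) :=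
      tendsto_nhdsWithin_of_tendsto_nhds_of_eventually_within s hstend
        (Filter.Eventually.of_forall (fun n => mem_Iic.mpr (hsle n)))
    have h1 : Tendsto (fun n => infEdist v (S (s n))) Filter.atTop
        (nhds (infEdist v (S t))) := hct.tendsto.comp hstend'
    have h2 : Tendsto (fun n => edist v (y (s n))) Filter.atTop (nhds 0) := by
      have : Tendsto (fun n => edist v (y (s n))) Filter.atTop (nhds (edist v (y t))) :=
        ((continuous_const.edist hy).tendsto t).comp hstend
      simpa [hv] using this
    have hle : ∀ n, infEdist v (S (s n)) ≤ edist v (y (s n)) := fun n =>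
      infEdist_le_edist_of_mem (hs2 n)
    exact le_antisymm (le_of_tendsto_of_tendsto' h1 h2 hle) zero_le'
  · have hct := hcont t htU
    choose s hs1 hs2 using fun n : ℕ =>
      hA t (t + 1 / (n + 1)) (by simpa using (by positivity : (0:ℝ) < 1 / (n + 1)))
    have hsge : ∀ n, t ≤ s n := fun n => (hs1 n).1.le
    have hstend : Tendsto s Filter.atTop (nhds t) := by
      have hr : Tendsto (fun n : ℕ => t + 1 / (n + 1)) Filter.atTop (nhds t) := by
        simpa using tendsto_const_nhds.add hone
      exact tendsto_of_tendsto_of_tendsto_of_le_of_le tendsto_const_nhds hr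
        hsge (fun n => (hs1 n).2.le)
    have hstend' : Tendsto s Filter.atTop (nhdsWithin t (Ici t)) :=
      tendsto_nhdsWithin_of_tendsto_nhds_of_eventually_within s hstend
        (Filter.Eventually.of_forall (fun n => mem_Ici.mpr (hsge n)))
    have h1 : Tendsto (fun n => infEdist v (S (s n))) Filter.atTop
        (nhds (infEdist v (S t))) := hct.tendsto.comp hstend'
    have h2 : Tendsto (fun n => edist v (y (s n))) Filter.atTop (nhds 0) := by
      have : Tendsto (fun n => edist v (y (s n))) Filter.atTop (nhds (edist v (y t))) :=
        ((continuous_const.edist hy).tendsto t).comp hstend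
      simpa [hv] using this
    have hle : ∀ n, infEdist v (S (s n)) ≤ edist v (y (s n)) := fun n =>
      infEdist_le_edist_of_mem (hs2 n)
    exact le_antisymm (le_of_tendsto_of_tendsto' h1 h2 hle) zero_le'
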